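/- Let ℓ ≥ 1 and let c₁, c₂ be nonzero complex numbers such that (c₂ − c₁)^{3^ℓ} = (−c₁)^{3^ℓ} and (c₁ − c₂)^{3^ℓ} = (−c₂)^{3^ℓ}. Then a contradiction arises; i.e., no such nonzero c₁, c₂ with c₁ ≠ c₂ exist. -/

import Mathlib

theorem stmt1 (ℓ : ℕ) (hℓ : 1 ≤ ℓ) (c₁ c₂ : ℂ) (hc₁ : c₁ ≠ 0) (hc₂ : c₂ ≠ 0)
    (hne : c₁ ≠ c₂)
    (e1 : (c₂ - c₁) ^ (3 ^ ℓ) = (-c₁) ^ (3 ^ ℓ))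
    (e2 : (c₁ - c₂) ^ (3 ^ ℓ) = (-c₂) ^ (3 ^ ℓ)) : False := by
  obtain ⟨m, rfl⟩ := Nat.exists_eq_add_of_le hℓ
  set n : ℕ := 3 ^ (1 + m) with hn
  have hodd : Odd n := Odd.pow ⟨1, by norm_num⟩
  have hn0 : n ≠ 0 := pow_ne_zero _ (by norm_num)
  have hdne : c₁ - c₂ ≠ 0 := sub_ne_zero.mpr hne
  have hdne2 : c₂ - c₁ ≠ 0 := fun h => hdne (by linear_combination -h)
  have h1 : (c₁ - c₂) ^ n = c₁ ^ n := by
    have h := e1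
    rw [show c₂ - c₁ = -(c₁ - c₂) by ring, hodd.neg_pow, hodd.neg_pow] at h
    exact neg_injective h
  have h2 : (c₂ - c₁) ^ n = c₂ ^ n := by
    have h := e2
    rw [show c₁ - c₂ = -(c₂ - c₁) by ring, hodd.neg_pow, hodd.neg_pow] at h
    exact neg_injective h
  set a : ℂ := c₁ / (c₁ - c₂) with ha
  set b : ℂ := c₂ / (c₂ - c₁) with hb
  have hab : a + b = 1 := by
    rw [ha, hb, div_add_div _ _ hdne hdne2, div_eq_one_iff_eq (mul_ne_zero hdne hdne2)]
    ring
  have han : a ^ n = 1 := by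
    rw [ha, div_pow, ← h1, div_self (pow_ne_zero _ hdne)]
  have hbn : b ^ n = 1 := by
    rw [hb, div_pow, ← h2, div_self (pow_ne_zero _ hdne2)]
  clear_value a b
  have habs : ‖a‖ = 1 := by
    have h : ‖a‖ ^ n = 1 ^ n := by
      rw [← norm_pow, han, norm_one, one_pow]
    exact (pow_left_inj₀ (norm_nonneg _) zero_le_one hn0).mp h
  have hbabs : ‖b‖ = 1 := by
    have h : ‖b‖ ^ n = 1 ^ n := by
      rw [← norm_pow, hbn, norm_one, one_pow]
    exact (pow_left_inj₀ (norm_nonneg _) zero_le_one hn0).mp h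
  have hma : a * (starRingEnd ℂ) a = 1 := by
    rw [Complex.mul_conj, ← Complex.sq_norm, habs]; norm_num
  have hmb : b * (starRingEnd ℂ) b = 1 := by
    rw [Complex.mul_conj, ← Complex.sq_norm, hbabs]; norm_num
  have hbb : b = 1 - a := by linear_combination hab
  have hconj : (starRingEnd ℂ) a = 1 - a := by
    have h : (1 - a) * ((1 : ℂ) - (starRingEnd ℂ) a) = 1 := by
      have := hmb
      rw [hbb, map_sub, map_one] at this
      exact this
    linear_combination hma - h
  have haq : a ^ 2 - a + 1 = 0 := by
    have := hma
    rw [hconj] at this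
    linear_combination -this
  have ha3 : a ^ 3 = -1 := by linear_combination (a + 1) * haq
  have hfin : a ^ n = -1 := by
    rw [show n = 3 * 3 ^ m from by rw [hn, pow_add, pow_one], pow_mul, ha3,
      Odd.neg_one_pow (Odd.pow ⟨1, by norm_num⟩)]
  rw [han] at hfin
  norm_num at hfin
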